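/- For a Busemann point ξ and a horofunction η of a metric space (X,d), the detour cost satisfies H(ξ,η) = sup_{x ∈ X}(η(x) − ξ(x)) = inf{λ ∈ ℝ : η ≤ ξ + λ pointwise}. -/
import Mathlib


open Set Filter Topology

/-- A sequence `z` in `X` converges to the horofunction-boundary point `ξ`:
`z` leaves every bounded set and `ψ_{z n} → ξ` pointwise. -/
def ConvergesToHorofunction {X : Type*} [MetricSpace X] (b : X) (z : ℕ → X)
    (ξ : X → ℝ) : Prop :=
  Tendsto (fun n => dist b (z n)) atTop atTop ∧
    ∀ x : X, Tendsto (fun n => dist x (z n) - dist b (z n)) atTop (𝓝 (ξ x))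

/-- `ξ` is a horofunction of `X` with base-point `b`. -/
def IsHorofunction {X : Type*} [MetricSpace X] (b : X) (ξ : X → ℝ) : Prop :=
  ∃ z : ℕ → X, ConvergesToHorofunction b z ξ

/-- `γ : T → X` is an almost-geodesic. -/
def IsAlmostGeodesic {X : Type*} [MetricSpace X] (T : Set ℝ) (γ : ℝ → X) : Prop :=
  0 ∈ T ∧ T ⊆ Set.Ici (0:ℝ) ∧ ¬ BddAbove T ∧
  ∀ ε > (0:ℝ), ∃ N : ℝ, ∀ s ∈ T, ∀ t ∈ T, N ≤ s → s ≤ t →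
    |dist (γ 0) (γ s) + dist (γ s) (γ t) - t| < ε

/-- `ξ` is a Busemann point: a horofunction which is the limit of an almost-geodesic. -/
def IsBusemann {X : Type*} [MetricSpace X] (b : X) (ξ : X → ℝ) : Prop :=
  IsHorofunction b ξ ∧ ∃ T : Set ℝ, ∃ γ : ℝ → X, IsAlmostGeodesic T γ ∧
    ∀ x : X, Tendsto (fun t => dist x (γ t) - dist b (γ t)) (atTop ⊓ 𝓟 T) (𝓝 (ξ x))

-- Lipschitz lemma
lemma horo_lip {X : Type*} [MetricSpace X] {b : X} {η : X → ℝ}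
    (hη : IsHorofunction b η) (x y : X) : η x ≤ η y + dist x y := by
  obtain ⟨w, hw⟩ := hη
  refine le_of_tendsto_of_tendsto' (hw.2 x) (((hw.2 y).add_const (dist x y))) fun n => ?_
  have := dist_triangle x y (w n)
  linarith

-- NeBot of the filter
lemma L_neBot {T : Set ℝ} (hT : ¬ BddAbove T) : (atTop ⊓ 𝓟 T).NeBot := by
  rw [inf_principal_neBot_iff]
  intro U hU
  obtain ⟨a, ha⟩ := mem_atTop_sets.mp hU
  obtain ⟨t, htT, hat⟩ := not_bddAbove_iff.mp hT a
  exact ⟨t, ha t hat.le, htT⟩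

-- Key analytic lemma: along an almost-geodesic, d(b,γs)+ξ(γs) → 0
lemma busemann_key {X : Type*} [MetricSpace X] {b : X} {ξ : X → ℝ} {T : Set ℝ} {γ : ℝ → X}
    (hAG : IsAlmostGeodesic T γ)
    (hlim : ∀ x : X, Tendsto (fun t => dist x (γ t) - dist b (γ t)) (atTop ⊓ 𝓟 T) (𝓝 (ξ x))) :
    Tendsto (fun s => dist b (γ s) + ξ (γ s)) (atTop ⊓ 𝓟 T) (𝓝 0) := by
  haveI : (atTop ⊓ 𝓟 T).NeBot := L_neBot hAG.2.2.1
  set L := atTop ⊓ 𝓟 T with hL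
  -- step 1 : dist (γ 0) (γ t) - t → 0
  have step1 : Tendsto (fun t => dist (γ 0) (γ t) - t) L (𝓝 0) := by
    rw [Metric.tendsto_nhds]
    intro ε hε
    obtain ⟨N, hN⟩ := hAG.2.2.2 ε hε
    rw [hL, eventually_inf_principal]
    filter_upwards [eventually_ge_atTop N] with t htN htT
    have h := hN t htT t htT htN le_rfl
    rw [dist_self, add_zero] at h
    rwa [Real.dist_eq, sub_zero]
  have hnonneg : ∀ x : X, -dist b x ≤ ξ x := by
    intro x
    refine le_of_tendsto_of_tendsto' tendsto_const_nhds (hlim x) fun t => ?_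
    have := dist_triangle b x (γ t)
    linarith
  rw [Metric.tendsto_nhds]
  intro ε hε
  obtain ⟨N, hN⟩ := hAG.2.2.2 (ε/4) (by positivity)
  have key : ∀ s ∈ T, N ≤ s → ξ (γ s) + dist (γ 0) (γ s) ≤ ξ (γ 0) + ε/4 := by
    intro s hsT hsN
    have hg : Tendsto (fun t => (ε/4 - dist (γ 0) (γ s)) +
        ((dist (γ 0) (γ t) - dist b (γ t)) - (dist (γ 0) (γ t) - t))) L
        (𝓝 ((ε/4 - dist (γ 0) (γ s)) + (ξ (γ 0) - 0))) :=
      tendsto_const_nhds.add ((hlim (γ 0)).sub step1)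
    have hev : ∀ᶠ t in L, dist (γ s) (γ t) - dist b (γ t) ≤
        (ε/4 - dist (γ 0) (γ s)) +
        ((dist (γ 0) (γ t) - dist b (γ t)) - (dist (γ 0) (γ t) - t)) := by
      rw [hL, eventually_inf_principal]
      filter_upwards [eventually_ge_atTop s] with t hts htT
      have h := hN s hsT t htT hsN hts
      have h2 := abs_lt.mp h
      linarith [h2.2]
    have := le_of_tendsto_of_tendsto (hlim (γ s)) hg hev
    linarith
  have h2 : ∀ᶠ s in L, ξ (γ 0) - ε/4 < dist (γ 0) (γ s) - dist b (γ s) :=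
    (hlim (γ 0)).eventually (eventually_gt_nhds (by linarith))
  have h4 : ∀ᶠ s in L, ξ (γ s) + dist (γ 0) (γ s) ≤ ξ (γ 0) + ε/4 := by
    rw [hL, eventually_inf_principal]
    filter_upwards [eventually_ge_atTop N] with s hsN hsT
    exact key s hsT hsN
  filter_upwards [h2, h4] with s hs2 hs4
  have h0 : 0 ≤ dist b (γ s) + ξ (γ s) := by have := hnonneg (γ s); linarith
  rw [Real.dist_eq, sub_zero, abs_of_nonneg h0]
  linarith

/-- The detour cost `H(ξ,η)`: the infimum, over sequences converging to `ξ`, of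
`liminf (d(b, z n) + η(z n))`. -/
noncomputable def detourCost {X : Type*} [MetricSpace X] (b : X) (ξ η : X → ℝ) : EReal :=
  ⨅ z : {z : ℕ → X // ConvergesToHorofunction b z ξ},
    Filter.liminf (fun n => ((dist b (z.1 n) + η (z.1 n) : ℝ) : EReal)) atTop

/-- For a Busemann point `ξ` and horofunction `η`,
`H(ξ,η) = sup_x (η(x) - ξ(x)) = inf {λ | η ≤ ξ + λ}`. -/
theorem detour_cost_formula {X : Type*} [MetricSpace X] (b : X) (ξ η : X → ℝ)
    (hξ : IsBusemann b ξ) (hη : IsHorofunction b η) :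
    detourCost b ξ η = ⨆ x : X, ((η x - ξ x : ℝ) : EReal) ∧
    detourCost b ξ η = sInf ((fun l : ℝ => (l : EReal)) '' {l : ℝ | ∀ x, η x ≤ ξ x + l}) := by
  obtain ⟨hhoro, T, γ, hAG, hlim⟩ := hξ
  haveI : (atTop ⊓ 𝓟 T).NeBot := L_neBot hAG.2.2.1
  set S := ⨆ x : X, ((η x - ξ x : ℝ) : EReal) with hS
  -- the witnessing sequence from the almost-geodesic
  have hts : ∀ n : ℕ, ∃ t, t ∈ T ∧ (n : ℝ) < t := by
    intro n
    obtain ⟨y, hy, h⟩ := not_bddAbove_iff.mp hAG.2.2.1 (n : ℝ)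
    exact ⟨y, hy, h⟩
  choose t htT htn using hts
  have htend : Tendsto t atTop (atTop ⊓ 𝓟 T) := by
    rw [tendsto_inf]
    constructor
    · exact tendsto_atTop_mono (fun n => (htn n).le) tendsto_natCast_atTop_atTop
    · exact tendsto_principal.mpr (Eventually.of_forall htT)
  -- the key limit
  have tendq : Tendsto (fun s => dist b (γ s) + ξ (γ s)) (atTop ⊓ 𝓟 T) (𝓝 0) :=
    busemann_key hAG hlim
  -- dist b (γ s) → ∞ along the filter
  have distb_atTop : Tendsto (fun s => dist b (γ s)) (atTop ⊓ 𝓟 T) atTop := by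
    have h1 : Tendsto (fun s => (dist b (γ s) - dist (γ 0) (γ s)) +
        (dist (γ 0) (γ s) - s)) (atTop ⊓ 𝓟 T) (𝓝 (-ξ (γ 0) + 0)) := by
      refine Tendsto.add ?_ ?_
      · have := (hlim (γ 0)).neg
        refine this.congr fun s => by ring
      · -- dist (γ 0) (γ s) - s → 0 : reprove via busemann_key? re-derive
        rw [Metric.tendsto_nhds]
        intro ε hε
        obtain ⟨N, hN⟩ := hAG.2.2.2 ε hε
        rw [eventually_inf_principal]
        filter_upwards [eventually_ge_atTop N] with s hsN hsT
        have h := hN s hsT s hsT hsN le_rfl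
        rw [dist_self, add_zero] at h
        rwa [Real.dist_eq, sub_zero]
    have h2 : Tendsto (fun s : ℝ => s) (atTop ⊓ 𝓟 T) atTop :=
      tendsto_id.mono_left inf_le_left
    have := h1.add_atTop h2
    refine this.congr fun s => by ring
  set z : ℕ → X := fun n => γ (t n) with hz
  have hzconv : ConvergesToHorofunction b z ξ :=
    ⟨distb_atTop.comp htend, fun x => (hlim x).comp htend⟩
  -- upper bound : for any real l with η ≤ ξ + l, detourCost ≤ l
  have hub : ∀ l : ℝ, (∀ x, η x ≤ ξ x + l) → detourCost b ξ η ≤ (l : EReal) := by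
    intro l hl
    refine le_trans (iInf_le _ ⟨z, hzconv⟩) ?_
    have hq : Tendsto (fun n => (dist b (z n) + ξ (z n)) + l) atTop (𝓝 (0 + l)) :=
      (tendq.comp htend).add_const l
    have hq' : Tendsto (fun n => (((dist b (z n) + ξ (z n)) + l : ℝ) : EReal)) atTop
        (𝓝 ((l : ℝ) : EReal)) := by
      rw [EReal.tendsto_coe]
      simpa using hq
    have heq : liminf (fun n => (((dist b (z n) + ξ (z n)) + l : ℝ) : EReal)) atTop
        = ((l : ℝ) : EReal) := hq'.liminf_eq
    calc liminf (fun n => ((dist b (z n) + η (z n) : ℝ) : EReal)) atTop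
        ≤ liminf (fun n => (((dist b (z n) + ξ (z n)) + l : ℝ) : EReal)) atTop := by
          refine liminf_le_liminf (Eventually.of_forall fun n => ?_)
          rw [EReal.coe_le_coe_iff]
          have := hl (z n)
          linarith
      _ = (l : EReal) := heq
  -- lower bound : S ≤ detourCost
  have hlb : S ≤ detourCost b ξ η := by
    refine le_iInf fun ⟨w, hw⟩ => iSup_le fun x => ?_
    have ha : Tendsto (fun n => η x - (dist x (w n) - dist b (w n))) atTop
        (𝓝 (η x - ξ x)) := tendsto_const_nhds.sub (hw.2 x)
    have ha' : Tendsto (fun n => ((η x - (dist x (w n) - dist b (w n)) : ℝ) : EReal)) atTop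
        (𝓝 ((η x - ξ x : ℝ) : EReal)) := by rw [EReal.tendsto_coe]; exact ha
    calc ((η x - ξ x : ℝ) : EReal)
        = liminf (fun n => ((η x - (dist x (w n) - dist b (w n)) : ℝ) : EReal)) atTop :=
          ha'.liminf_eq.symm
      _ ≤ liminf (fun n => ((dist b (w n) + η (w n) : ℝ) : EReal)) atTop := by
          refine liminf_le_liminf (Eventually.of_forall fun n => ?_)
          rw [EReal.coe_le_coe_iff]
          have := horo_lip hη x (w n)
          linarith
  have hSbot : S ≠ ⊥ := by
    intro h
    have := le_iSup (fun x : X => ((η x - ξ x : ℝ) : EReal)) b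
    rw [← hS, h, le_bot_iff] at this
    exact EReal.coe_ne_bot _ this
  -- first equality
  have h1 : detourCost b ξ η = S := by
    refine le_antisymm ?_ hlb
    by_cases hStop : S = ⊤
    · rw [hStop]; exact le_top
    · have hco : ((S.toReal : ℝ) : EReal) = S := EReal.coe_toReal hStop hSbot
      have hl : ∀ x, η x ≤ ξ x + S.toReal := by
        intro x
        have := le_iSup (fun x : X => ((η x - ξ x : ℝ) : EReal)) x
        rw [← hS, ← hco, EReal.coe_le_coe_iff] at this
        linarith
      rw [← hco]
      exact hub _ hl
  refine ⟨h1, h1.trans ?_⟩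
  refine le_antisymm ?_ ?_
  · refine le_sInf fun e he => ?_
    obtain ⟨l, hl, rfl⟩ := he
    refine iSup_le fun x => ?_
    rw [EReal.coe_le_coe_iff]
    have := hl x
    linarith
  · by_cases hStop : S = ⊤
    · rw [hStop]; exact le_top
    · have hco : ((S.toReal : ℝ) : EReal) = S := EReal.coe_toReal hStop hSbot
      have hl : ∀ x, η x ≤ ξ x + S.toReal := by
        intro x
        have := le_iSup (fun x : X => ((η x - ξ x : ℝ) : EReal)) x
        rw [← hS, ← hco, EReal.coe_le_coe_iff] at this
        linarith
      rw [← hco]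
      exact sInf_le ⟨S.toReal, hl, rfl⟩
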